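/- |a − c h / 2| ≤ (c⁴/8)(M'' + 6 (M')²). -/

import Mathlib

open intervalIntegral Real

lemma circle_int (c : ℝ) (hc : 0 < c) :
    ∫ x in (-c)..c, Real.sqrt (c ^ 2 - x ^ 2) = Real.pi * c ^ 2 / 2 := by
  have h := intervalIntegral.smul_integral_comp_mul_left
    (f := fun x : ℝ => Real.sqrt (c ^ 2 - x ^ 2)) (a := (-1:ℝ)) (b := (1:ℝ)) c
  have h2 : (∫ x in (-1:ℝ)..1, Real.sqrt (c ^ 2 - (c * x) ^ 2))
      = ∫ x in (-1:ℝ)..1, c * Real.sqrt (1 - x ^ 2) := by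
    apply intervalIntegral.integral_congr
    intro x _
    show Real.sqrt (c ^ 2 - (c * x) ^ 2) = c * Real.sqrt (1 - x ^ 2)
    have : c ^ 2 - (c * x) ^ 2 = c ^ 2 * (1 - x ^ 2) := by ring
    rw [this, Real.sqrt_mul (sq_nonneg c), Real.sqrt_sq hc.le]
  rw [h2] at h
  rw [intervalIntegral.integral_const_mul, integral_sqrt_one_sub_sq] at h
  have h3 : c * (-1:ℝ) = -c := by ring
  have h4 : c * (1:ℝ) = c := by ring
  rw [h3, h4] at h
  rw [← h]
  simp [smul_eq_mul]
  ring

lemma odd_int (c : ℝ) :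
    ∫ x in (-c)..c, x * Real.sqrt (c ^ 2 - x ^ 2) = 0 := by
  have h := intervalIntegral.integral_comp_neg (a := (-c:ℝ)) (b := c)
    (fun x : ℝ => x * Real.sqrt (c ^ 2 - x ^ 2))
  simp only [neg_neg] at h
  have h2 : (∫ x in (-c)..c, (-x) * Real.sqrt (c ^ 2 - (-x) ^ 2))
      = ∫ x in (-c)..c, -(x * Real.sqrt (c ^ 2 - x ^ 2)) := by
    apply intervalIntegral.integral_congr
    intro x _
    show (-x) * Real.sqrt (c ^ 2 - (-x) ^ 2) = -(x * Real.sqrt (c ^ 2 - x ^ 2))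
    rw [neg_sq]; ring
  rw [h2, intervalIntegral.integral_neg] at h
  linarith

lemma abs_int_abs (x : ℝ) : abs (∫ t in (0:ℝ)..x, |t|) = x ^ 2 / 2 := by
  rcases le_or_gt 0 x with hx | hx
  · have h : (∫ t in (0:ℝ)..x, |t|) = ∫ t in (0:ℝ)..x, t := by
      apply intervalIntegral.integral_congr
      intro t ht
      rw [Set.uIcc_of_le hx] at ht
      exact abs_of_nonneg ht.1
    rw [h, integral_id]
    simp [abs_of_nonneg]
    positivity
  · have h : (∫ t in (0:ℝ)..x, |t|) = ∫ t in (0:ℝ)..x, -t := by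
      apply intervalIntegral.integral_congr
      intro t ht
      rw [Set.uIcc_of_ge hx.le] at ht
      exact abs_of_nonpos ht.2
    rw [h, intervalIntegral.integral_neg, integral_id, abs_neg]
    have he : ((x:ℝ) ^ 2 - 0 ^ 2) / 2 = x ^ 2 / 2 := by ring
    rw [he, abs_of_nonneg (by positivity)]

set_option maxHeartbeats 1000000 in
theorem stmt_7
    (c : ℝ) (hc : 0 < c)
    (V V' V'' : ℝ → ℝ)
    (hV1 : ∀ x ∈ Set.Icc (-c) c, HasDerivAt V (V' x) x)
    (hV2 : ∀ x ∈ Set.Icc (-c) c, HasDerivAt V' (V'' x) x)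
    (hV2c : ContinuousOn V'' (Set.Icc (-c) c))
    (hVnn : ∀ x ∈ Set.Icc (-c) c, 0 ≤ V x)
    (r v : ℝ → ℝ)
    (hr : ∀ x, r x = Real.sqrt (c ^ 2 - x ^ 2))
    (hv : ∀ x, v x = r x * (1 + V x))
    (z₀ : ℝ) (hz₀ : z₀ ∈ Set.Ioo (-c) c)
    (hmax : ∀ x ∈ Set.Icc (-c) c, v x ≤ v z₀)
    (M M' M'' : ℝ)
    (hM : IsLUB (V '' Set.Icc (-c) c) M)
    (hM' : IsLUB ((fun x => |V' x|) '' Set.Icc (-c) c) M')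
    (hM'' : IsLUB ((fun x => |V'' x|) '' Set.Icc (-c) c) M'')
    (a : ℝ) (ha : a = (1 / Real.pi) * ∫ x in (-c)..c, v x)
    :
    |a - c * v z₀ / 2| ≤ c ^ 4 / 8 * (M'' + 6 * M' ^ 2) := by
  have hcc : -c ≤ c := by linarith
  have h0m : (0:ℝ) ∈ Set.Icc (-c) c := ⟨by linarith, hc.le⟩
  have hz₀m : z₀ ∈ Set.Icc (-c) c := ⟨hz₀.1.le, hz₀.2.le⟩
  have hVc : ContinuousOn V (Set.Icc (-c) c) :=
    fun x hx => (hV1 x hx).continuousAt.continuousWithinAt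
  have hV'c : ContinuousOn V' (Set.Icc (-c) c) :=
    fun x hx => (hV2 x hx).continuousAt.continuousWithinAt
  have hrf : r = fun x => Real.sqrt (c ^ 2 - x ^ 2) := funext hr
  have hrcont : Continuous r := by
    rw [hrf]; exact (continuous_const.sub (continuous_pow 2)).sqrt
  have hrnn : ∀ x, 0 ≤ r x := fun x => by rw [hr]; exact Real.sqrt_nonneg _
  have hrle : ∀ x, r x ≤ c := by
    intro x
    rw [hr]
    calc Real.sqrt (c ^ 2 - x ^ 2) ≤ Real.sqrt (c ^ 2) :=
          Real.sqrt_le_sqrt (by nlinarith [sq_nonneg x])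
      _ = c := Real.sqrt_sq hc.le
  have hM'b : ∀ x ∈ Set.Icc (-c) c, |V' x| ≤ M' := fun x hx => hM'.1 ⟨x, hx, rfl⟩
  have hM''b : ∀ x ∈ Set.Icc (-c) c, |V'' x| ≤ M'' := fun x hx => hM''.1 ⟨x, hx, rfl⟩
  have hM'nn : 0 ≤ M' := (abs_nonneg _).trans (hM'b 0 h0m)
  have hM''nn : 0 ≤ M'' := (abs_nonneg _).trans (hM''b 0 h0m)
  have hsub : ∀ x ∈ Set.Icc (-c) c, Set.uIcc (0:ℝ) x ⊆ Set.Icc (-c) c :=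
    fun x hx => Set.uIcc_subset_Icc h0m hx
  -- V' lipschitz bound from 0
  have hV'lip : ∀ x ∈ Set.Icc (-c) c, |V' x - V' 0| ≤ M'' * |x| := by
    intro x hx
    have hftc : ∫ t in (0:ℝ)..x, V'' t = V' x - V' 0 :=
      intervalIntegral.integral_eq_sub_of_hasDerivAt
        (fun t ht => hV2 t (hsub x hx ht))
        ((hV2c.mono (hsub x hx)).intervalIntegrable)
    rw [← hftc]
    have := intervalIntegral.norm_integral_le_of_norm_le_const
      (f := V'') (a := 0) (b := x) (C := M'')
      (fun t ht => hM''b t (hsub x hx (Set.uIoc_subset_uIcc ht)))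
    simpa [Real.norm_eq_abs] using this
  have hVlipz : |V z₀ - V 0| ≤ M' * |z₀| := by
    have hftc : ∫ t in (0:ℝ)..z₀, V' t = V z₀ - V 0 :=
      intervalIntegral.integral_eq_sub_of_hasDerivAt
        (fun t ht => hV1 t (hsub z₀ hz₀m ht))
        ((hV'c.mono (hsub z₀ hz₀m)).intervalIntegrable)
    rw [← hftc]
    have := intervalIntegral.norm_integral_le_of_norm_le_const
      (f := V') (a := 0) (b := z₀) (C := M')
      (fun t ht => hM'b t (hsub z₀ hz₀m (Set.uIoc_subset_uIcc ht)))
    simpa [Real.norm_eq_abs] using this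
  -- Taylor bound at 0
  have hTay : ∀ x ∈ Set.Icc (-c) c, |V x - V 0 - V' 0 * x| ≤ M'' / 2 * x ^ 2 := by
    intro x hx
    have hV'int : IntervalIntegrable V' MeasureTheory.volume 0 x :=
      (hV'c.mono (hsub x hx)).intervalIntegrable
    have hftc : ∫ t in (0:ℝ)..x, V' t = V x - V 0 :=
      intervalIntegral.integral_eq_sub_of_hasDerivAt
        (fun t ht => hV1 t (hsub x hx ht)) hV'int
    have hconst : ∫ t in (0:ℝ)..x, V' 0 = V' 0 * x := by simp [mul_comm]
    have hrepr : V x - V 0 - V' 0 * x = ∫ t in (0:ℝ)..x, (V' t - V' 0) := by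
      rw [intervalIntegral.integral_sub hV'int intervalIntegrable_const, hftc, hconst]
    rw [hrepr]
    have hgint : IntervalIntegrable (fun t => M'' * |t|) MeasureTheory.volume 0 x :=
      (continuous_const.mul continuous_abs).intervalIntegrable _ _
    have hb := intervalIntegral.norm_integral_le_abs_of_norm_le
      (f := fun t => V' t - V' 0) (g := fun t => M'' * |t|) (μ := MeasureTheory.volume)
      (a := 0) (b := x)
      ((MeasureTheory.ae_restrict_iff' measurableSet_uIoc).mpr
        (Filter.Eventually.of_forall fun t ht => by
          simpa [Real.norm_eq_abs] using
            hV'lip t (hsub x hx (Set.uIoc_subset_uIcc ht)))) hgint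
    have hcomp : abs (∫ t in (0:ℝ)..x, M'' * |t|) = M'' / 2 * x ^ 2 := by
      rw [intervalIntegral.integral_const_mul, abs_mul, abs_of_nonneg hM''nn, abs_int_abs]
      ring
    calc |∫ t in (0:ℝ)..x, (V' t - V' 0)| = ‖∫ t in (0:ℝ)..x, (V' t - V' 0)‖ :=
          (Real.norm_eq_abs _).symm
      _ ≤ abs (∫ t in (0:ℝ)..x, M'' * |t|) := hb
      _ = M'' / 2 * x ^ 2 := hcomp
  -- integral decomposition
  have huIcc : Set.uIcc (-c) c = Set.Icc (-c) c := Set.uIcc_of_le hcc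
  have hIr : ∫ x in (-c)..c, r x = Real.pi * c ^ 2 / 2 := by
    simp only [hrf]; exact circle_int c hc
  have hIxr : ∫ x in (-c)..c, x * r x = 0 := by
    simp only [hrf]; exact odd_int c
  have hg1acont : Continuous (fun x : ℝ => (1 + V 0) * r x) := continuous_const.mul hrcont
  have hg1bcont : Continuous (fun x : ℝ => V' 0 * (x * r x)) :=
    continuous_const.mul (continuous_id.mul hrcont)
  have hg1cont : Continuous (fun x : ℝ => (1 + V 0) * r x + V' 0 * (x * r x)) :=
    hg1acont.add hg1bcont
  have hg2cont : ContinuousOn (fun x => r x * (V x - V 0 - V' 0 * x)) (Set.Icc (-c) c) := by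
    apply hrcont.continuousOn.mul
    exact (hVc.sub continuousOn_const).sub (continuous_const.mul continuous_id).continuousOn
  have hg2int : IntervalIntegrable (fun x => r x * (V x - V 0 - V' 0 * x))
      MeasureTheory.volume (-c) c := by
    apply ContinuousOn.intervalIntegrable
    rw [huIcc]; exact hg2cont
  have hg1int : IntervalIntegrable (fun x => (1 + V 0) * r x + V' 0 * (x * r x))
      MeasureTheory.volume (-c) c := hg1cont.intervalIntegrable _ _
  have hIv : ∫ x in (-c)..c, v x
      = (∫ x in (-c)..c, ((1 + V 0) * r x + V' 0 * (x * r x)))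
        + ∫ x in (-c)..c, r x * (V x - V 0 - V' 0 * x) := by
    rw [← intervalIntegral.integral_add hg1int hg2int]
    apply intervalIntegral.integral_congr
    intro x _
    rw [hv x]; ring
  have hIg1 : (∫ x in (-c)..c, ((1 + V 0) * r x + V' 0 * (x * r x)))
      = (1 + V 0) * (Real.pi * c ^ 2 / 2) := by
    rw [intervalIntegral.integral_add (hg1acont.intervalIntegrable _ _)
      (hg1bcont.intervalIntegrable _ _),
      intervalIntegral.integral_const_mul, intervalIntegral.integral_const_mul, hIr, hIxr]
    ring
  set J := ∫ x in (-c)..c, r x * (V x - V 0 - V' 0 * x) with hJdef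
  have hJ : |J| ≤ M'' * c ^ 4 / 3 := by
    have hgint : IntervalIntegrable (fun t : ℝ => c * (M'' / 2 * t ^ 2))
        MeasureTheory.volume (-c) c :=
      (continuous_const.mul (continuous_const.mul (continuous_pow 2))).intervalIntegrable _ _
    have hb := intervalIntegral.norm_integral_le_abs_of_norm_le
      (f := fun x => r x * (V x - V 0 - V' 0 * x)) (g := fun t => c * (M'' / 2 * t ^ 2))
      (μ := MeasureTheory.volume) (a := -c) (b := c)
      ((MeasureTheory.ae_restrict_iff' measurableSet_uIoc).mpr
        (Filter.Eventually.of_forall fun t ht => by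
          have htm : t ∈ Set.Icc (-c) c := huIcc ▸ Set.uIoc_subset_uIcc ht
          have h1 : |r t| ≤ c := by rw [abs_of_nonneg (hrnn t)]; exact hrle t
          have h2 := hTay t htm
          rw [Real.norm_eq_abs, abs_mul]
          exact mul_le_mul h1 h2 (abs_nonneg _) hc.le)) hgint
    have hcomp : |∫ t in (-c)..c, c * (M'' / 2 * t ^ 2)| = M'' * c ^ 4 / 3 := by
      have heq : (fun t : ℝ => c * (M'' / 2 * t ^ 2)) = fun t : ℝ => (c * (M'' / 2)) * t ^ 2 := by
        funext t; ring
      have hval : ∫ t in (-c)..c, c * (M'' / 2 * t ^ 2) = M'' * c ^ 4 / 3 := by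
        rw [heq, intervalIntegral.integral_const_mul, integral_pow]
        norm_num
        ring
      rw [hval, abs_of_nonneg (div_nonneg (mul_nonneg hM''nn (by positivity)) (by norm_num))]
    rw [Real.norm_eq_abs] at hb
    rw [← hcomp]; exact hb
  have hπ : (3:ℝ) < Real.pi := Real.pi_gt_three
  have hπ0 : (0:ℝ) < Real.pi := by linarith
  -- a in terms of J
  have haeq : a = (1 + V 0) * c ^ 2 / 2 + J / Real.pi := by
    rw [ha, hIv, hIg1]
    field_simp
  -- stationary point analysis
  have hden : 0 < c ^ 2 - z₀ ^ 2 := by nlinarith [hz₀.1, hz₀.2]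
  have hs : 0 < Real.sqrt (c ^ 2 - z₀ ^ 2) := Real.sqrt_pos.mpr hden
  have hs2 : Real.sqrt (c ^ 2 - z₀ ^ 2) ^ 2 = c ^ 2 - z₀ ^ 2 := Real.sq_sqrt hden.le
  have hd1 : HasDerivAt (fun x : ℝ => c ^ 2 - x ^ 2) (-(2 * z₀)) z₀ := by
    simpa using (hasDerivAt_pow 2 z₀).const_sub (c ^ 2)
  have hd2 : HasDerivAt (fun x : ℝ => Real.sqrt (c ^ 2 - x ^ 2))
      (1 / (2 * Real.sqrt (c ^ 2 - z₀ ^ 2)) * (-(2 * z₀))) z₀ := by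
    have := (Real.hasDerivAt_sqrt hden.ne').comp z₀ hd1
    simpa [Function.comp_def] using this
  have hdV : HasDerivAt (fun x => 1 + V x) (V' z₀) z₀ := (hV1 z₀ hz₀m).const_add 1
  have hd3 : HasDerivAt v
      (1 / (2 * Real.sqrt (c ^ 2 - z₀ ^ 2)) * (-(2 * z₀)) * (1 + V z₀)
        + Real.sqrt (c ^ 2 - z₀ ^ 2) * V' z₀) z₀ := by
    have hveq : v = fun x => Real.sqrt (c ^ 2 - x ^ 2) * (1 + V x) := by
      funext x; rw [hv, hr]
    rw [hveq]
    exact hd2.mul hdV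
  have hlocmax : IsLocalMax v z₀ :=
    Filter.eventually_of_mem (Icc_mem_nhds hz₀.1 hz₀.2) hmax
  have hcrit := hlocmax.hasDerivAt_eq_zero hd3
  have hkey : z₀ * (1 + V z₀) = (c ^ 2 - z₀ ^ 2) * V' z₀ := by
    have hkey' : z₀ * (1 + V z₀) = Real.sqrt (c ^ 2 - z₀ ^ 2) ^ 2 * V' z₀ := by
      field_simp at hcrit
      nlinarith [hcrit, hs]
    rw [hs2] at hkey'
    exact hkey'
  have hVz₀nn : 0 ≤ V z₀ := hVnn z₀ hz₀m
  have hz₀b : |z₀| ≤ c ^ 2 * M' := by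
    have h1 : |z₀| * (1 + V z₀) = (c ^ 2 - z₀ ^ 2) * |V' z₀| := by
      have h := congrArg abs hkey
      rwa [abs_mul, abs_mul, abs_of_pos (by linarith : (0:ℝ) < 1 + V z₀),
        abs_of_pos hden] at h
    have h2 : (c ^ 2 - z₀ ^ 2) * |V' z₀| ≤ c ^ 2 * M' := by
      apply mul_le_mul (by nlinarith [sq_nonneg z₀]) (hM'b z₀ hz₀m) (abs_nonneg _) (by positivity)
    nlinarith [abs_nonneg z₀]
  -- top estimate
  have hv0 : v 0 = c * (1 + V 0) := by
    rw [hv, hr]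
    norm_num [Real.sqrt_sq hc.le]
  have htop1 : c * (1 + V 0) ≤ v z₀ := hv0 ▸ hmax 0 h0m
  have htop2 : v z₀ - c * (1 + V 0) ≤ c ^ 3 * M' ^ 2 := by
    have h1 : v z₀ ≤ c * (1 + V z₀) := by
      rw [hv]
      exact mul_le_mul_of_nonneg_right (hrle z₀) (by linarith)
    have h2 : V z₀ - V 0 ≤ M' * |z₀| := (le_abs_self _).trans hVlipz
    have h3 : M' * |z₀| ≤ M' * (c ^ 2 * M') := mul_le_mul_of_nonneg_left hz₀b hM'nn
    nlinarith
  -- final assembly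
  set D := c * v z₀ - c ^ 2 * (1 + V 0) with hDdef
  have hD0 : 0 ≤ D := by
    have := mul_le_mul_of_nonneg_left htop1 hc.le
    rw [hDdef]; nlinarith
  have hD1 : D ≤ c ^ 4 * M' ^ 2 := by
    have := mul_le_mul_of_nonneg_left htop2 hc.le
    rw [hDdef]; nlinarith
  have hsplit : a - c * v z₀ / 2 = J / Real.pi - D / 2 := by
    rw [haeq, hDdef]; ring
  rw [hsplit]
  have habs : |J / Real.pi - D / 2| ≤ |J| / Real.pi + D / 2 := by
    calc |J / Real.pi - D / 2| ≤ |J / Real.pi| + |D / 2| := abs_sub _ _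
      _ = |J| / Real.pi + D / 2 := by
          rw [abs_div, abs_of_pos hπ0, abs_of_nonneg (by linarith : (0:ℝ) ≤ D / 2)]
  have hfin1 : |J| / Real.pi ≤ c ^ 4 / 8 * M'' := by
    rw [div_le_iff₀ hπ0]
    nlinarith [hJ, hπ, mul_nonneg hM''nn (pow_pos hc 4).le]
  have hfin2 : D / 2 ≤ c ^ 4 / 8 * (6 * M' ^ 2) := by
    nlinarith [pow_pos hc 4, sq_nonneg M']
  calc |J / Real.pi - D / 2| ≤ |J| / Real.pi + D / 2 := habs
    _ ≤ c ^ 4 / 8 * M'' + c ^ 4 / 8 * (6 * M' ^ 2) := add_le_add hfin1 hfin2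
    _ = c ^ 4 / 8 * (M'' + 6 * M' ^ 2) := by ring
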